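/- For each i ∈ {1, ..., m} let f_i : F_2^m → F_2^m be f_i(x) = x + e_i with X_i = {x : x · e_i = 0}, and let f_0 be the identity with X_0 = {x : x · (1,1,...,1) = 0}. Then for all distinct i, j ∈ {0, 1, ..., m}, the sets f_i(X_i) and f_j(X_i) are disjoint. -/

import Mathlib

/-- Inner product over F_2. -/
def dot2 {m : ℕ} (x y : Fin m → ZMod 2) : ZMod 2 := ∑ i, x i * y i

lemma dot2_add_left {m : ℕ} (x y z : Fin m → ZMod 2) :
    dot2 (x + y) z = dot2 x z + dot2 y z := by
  simp [dot2, add_mul, Finset.sum_add_distrib]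

lemma dot2_zero_left {m : ℕ} (z : Fin m → ZMod 2) : dot2 0 z = 0 := by
  simp [dot2]

theorem stmt_3 (m : ℕ) (i j : Fin (m + 1)) (hij : i ≠ j) :
    -- translation vector: w 0 = 0 (identity), w i = e_i for i ≥ 1
    let w : Fin (m + 1) → (Fin m → ZMod 2) := fun t =>
      if (t : ℕ) = 0 then 0 else fun k => if (k : ℕ) + 1 = (t : ℕ) then 1 else 0
    -- defining vector of X_t : all-ones for t = 0, e_t for t ≥ 1
    let c : Fin (m + 1) → (Fin m → ZMod 2) := fun t =>
      if (t : ℕ) = 0 then (fun _ => 1) else w t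
    let X : Fin (m + 1) → Set (Fin m → ZMod 2) := fun t => {x | dot2 x (c t) = 0}
    Disjoint ((fun x => x + w i) '' X i) ((fun x => x + w j) '' X i) := by
  intro w c X
  have wdef : ∀ t : Fin (m+1), (t:ℕ) ≠ 0 →
      w t = fun k : Fin m => if (k:ℕ) + 1 = (t:ℕ) then (1:ZMod 2) else 0 := by
    intro t ht; simp only [w, ht, ↓reduceIte]
  have hA : ∀ t : Fin (m+1), (t:ℕ) ≠ 0 → dot2 (w t) (fun _ => 1) = 1 := by
    intro t ht
    have htm : (t:ℕ) - 1 < m := by omega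
    have heq : ∀ k : Fin m, ((k:ℕ) + 1 = (t:ℕ)) ↔ k = ⟨(t:ℕ)-1, htm⟩ := by
      intro k
      constructor
      · intro h; apply Fin.ext; simp; omega
      · intro h; subst h; simp; omega
    rw [wdef t ht]
    simp only [dot2, mul_one]
    rw [Finset.sum_congr rfl (fun k _ => if_congr (heq k) rfl rfl)]
    simp
  have hB : ∀ t s : Fin (m+1), (t:ℕ) ≠ 0 → (s:ℕ) ≠ 0 →
      dot2 (w t) (w s) = if t = s then 1 else 0 := by
    intro t s ht hs
    rw [wdef t ht, wdef s hs]
    by_cases hts : t = s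
    · subst hts
      have htm : (t:ℕ) - 1 < m := by omega
      have heq : ∀ k : Fin m, ((k:ℕ) + 1 = (t:ℕ)) ↔ k = ⟨(t:ℕ)-1, htm⟩ := by
        intro k
        constructor
        · intro h; apply Fin.ext; simp; omega
        · intro h; subst h; simp; omega
      simp only [dot2, if_pos rfl]
      have key : ∀ k : Fin m, (if (k:ℕ) + 1 = (t:ℕ) then (1:ZMod 2) else 0) *
          (if (k:ℕ) + 1 = (t:ℕ) then 1 else 0) = if k = ⟨(t:ℕ)-1, htm⟩ then 1 else 0 := by
        intro k
        simp only [heq k]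
        split_ifs <;> ring
      rw [Finset.sum_congr rfl (fun k _ => key k)]
      simp
    · have hvne : (t:ℕ) ≠ (s:ℕ) := fun h => hts (Fin.ext h)
      rw [if_neg hts]
      apply Finset.sum_eq_zero
      intro k _
      show (if (k:ℕ) + 1 = (t:ℕ) then (1:ZMod 2) else 0) *
          (if (k:ℕ) + 1 = (s:ℕ) then 1 else 0) = 0
      split_ifs with h1 h2
      · exact absurd (by omega : (t:ℕ) = (s:ℕ)) hvne
      all_goals ring
  have K : dot2 (w i) (c i) + dot2 (w j) (c i) = 1 := by
    by_cases hi : (i:ℕ) = 0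
    · have hj : (j:ℕ) ≠ 0 := by
        intro h; exact hij (Fin.ext (by omega))
      have hwi : w i = 0 := by simp only [w, hi, ↓reduceIte]
      have hci : c i = fun _ => 1 := by simp only [c, hi, ↓reduceIte]
      rw [hwi, hci, dot2_zero_left, hA j hj, zero_add]
    · have hci : c i = w i := by simp only [c, hi, ↓reduceIte]
      by_cases hj : (j:ℕ) = 0
      · have hwj : w j = 0 := by simp only [w, hj, ↓reduceIte]
        rw [hci, hwj, dot2_zero_left, hB i i hi hi, if_pos rfl, add_zero]
      · rw [hci, hB i i hi hi, if_pos rfl, hB j i hj hi, if_neg (Ne.symm hij), add_zero]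
  rw [Set.disjoint_left]
  rintro a ⟨x, hx, rfl⟩ ⟨y, hy, hxy⟩
  have hx' : dot2 x (c i) = 0 := hx
  have hy' : dot2 y (c i) = 0 := hy
  have h2 := congrArg (fun v => dot2 v (c i)) hxy
  simp only [dot2_add_left, hx', hy', zero_add] at h2
  rw [h2] at K
  rw [CharTwo.add_self_eq_zero] at K
  exact absurd K (by decide)
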